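/- Let (G, π₁) and (G, π₂) be permutation groups on the same finite group G, with induced matrix representations Π₁, Π₂ and permutation polytopes P(Π₁), P(Π₂); G acts on each P(Π_i) by left multiplication, g · M := M_{π_i(g)} M. Then (G, π₁) and (G, π₂) are effectively equivalent if and only if there exist a group automorphism φ of G and an affine isomorphism Φ : aff(P(Π₁)) → aff(P(Π₂)) with Φ(P(Π₁)) = P(Π₂) and Φ(g · x) = φ(g) · Φ(x) for all g ∈ G and all vertices x of P(Π₁). -/

import Mathlib

open Finset

/-- The permutation matrix of `σ`: `(M_σ)_{ij} = 1` if `i = σ j` and `0` otherwise. -/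
def permMat (n : ℕ) (σ : Equiv.Perm (Fin n)) : Matrix (Fin n) (Fin n) ℝ :=
  Matrix.of fun i j => if i = σ j then 1 else 0

lemma permMat_one (n : ℕ) : permMat n 1 = 1 := by
  ext i j; simp [permMat, Matrix.one_apply]; congr

lemma permMat_mul (n : ℕ) (σ τ : Equiv.Perm (Fin n)) :
    permMat n (σ * τ) = permMat n σ * permMat n τ := by
  ext i j
  simp only [permMat, Matrix.mul_apply, Matrix.of_apply, Equiv.Perm.mul_apply]
  rw [Finset.sum_eq_single (τ j)]
  · simp; congr
  · intro k _ hk; simp [hk]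
  · simp

/-- The matrix representation `Π : G → GL_n(ℝ)`, `g ↦ M_{π(g)}`, acting on `ℝⁿ`. -/
noncomputable def permRep (n : ℕ) {G : Type} [Group G] (π : G →* Equiv.Perm (Fin n)) :
    Representation ℝ G (Fin n → ℝ) where
  toFun g := (permMat n (π g)).mulVecLin
  map_one' := by simp [permMat_one]; rfl
  map_mul' g h := by simp [permMat_mul]; rfl

variable {G : Type} [Group G] [Fintype G]

/-- The affine kernel `ker°ρ` of a real representation `ρ` of `G`. -/
def affKer {V : Type} [AddCommGroup V] [Module ℝ V]
    (ρ : Representation ℝ G V) : Set (G → ℝ) :=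
  {l | (∑ g : G, l g • (ρ g : V →ₗ[ℝ] V)) = 0 ∧ (∑ g : G, l g) = 0}

/-- Direct sum (realized on the product space) of two representations. -/
def prodRep {V W : Type} [AddCommGroup V] [Module ℝ V] [AddCommGroup W] [Module ℝ W]
    (ρ : Representation ℝ G V) (σ : Representation ℝ G W) :
    Representation ℝ G (V × W) where
  toFun g := (ρ g).prodMap (σ g)
  map_one' := by ext <;> simp
  map_mul' g h := by ext <;> simp

/-- Isomorphism of `G`-representations. -/
def RepIso {V W : Type} [AddCommGroup V] [Module ℝ V] [AddCommGroup W] [Module ℝ W]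
    (ρ : Representation ℝ G V) (σ : Representation ℝ G W) : Prop :=
  ∃ e : V ≃ₗ[ℝ] W, ∀ (g : G) (v : V), e (ρ g v) = σ g (e v)

/-- Stable equivalence of real representations. -/
def StablyEquivalent {V W : Type} [AddCommGroup V] [Module ℝ V] [AddCommGroup W] [Module ℝ W]
    (ρ₁ : Representation ℝ G V) (ρ₂ : Representation ℝ G W) : Prop :=
  ∃ (V' : Type) (_ : AddCommGroup V') (_ : Module ℝ V') (ρ₁' : Representation ℝ G V')
    (W' : Type) (_ : AddCommGroup W') (_ : Module ℝ W') (ρ₂' : Representation ℝ G W'),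
    affKer ρ₁ ⊆ affKer ρ₁' ∧ affKer ρ₂ ⊆ affKer ρ₂' ∧
    RepIso (prodRep ρ₁ ρ₁') (prodRep ρ₂ ρ₂')


----------------------------------------------------------------
-- Auxiliary lemmas
----------------------------------------------------------------

lemma mem_affKer_permRep {n : ℕ} (π : G →* Equiv.Perm (Fin n)) (l : G → ℝ) :
    l ∈ affKer (permRep n π) ↔
      (∑ g : G, l g • permMat n (π g)) = 0 ∧ (∑ g : G, l g) = 0 := by
  have key : (∑ g : G, l g • ((permRep n π) g : (Fin n → ℝ) →ₗ[ℝ] (Fin n → ℝ)))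
      = Matrix.toLin' (∑ g : G, l g • permMat n (π g)) := by
    rw [map_sum]
    refine Finset.sum_congr rfl fun g _ => ?_
    rw [map_smul, Matrix.toLin'_apply']
    rfl
  constructor
  · rintro ⟨h1, h2⟩
    refine ⟨?_, h2⟩
    rw [key] at h1
    exact (LinearEquiv.map_eq_zero_iff _).mp h1
  · rintro ⟨h1, h2⟩
    refine ⟨?_, h2⟩
    rw [key, h1, map_zero]

lemma affineMap_eqOn_affineSpan {E F : Type*} [AddCommGroup E] [Module ℝ E]
    [AddCommGroup F] [Module ℝ F] {f g : E →ᵃ[ℝ] F} {s : Set E}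
    (h : ∀ x ∈ s, f x = g x) {x : E} (hx : x ∈ affineSpan ℝ s) : f x = g x := by
  refine affineSpan_induction (p := fun y => f y = g y) hx h ?_
  intro c u v w hu hv hw
  rw [AffineMap.map_vadd, AffineMap.map_vadd, map_smul, map_smul,
    AffineMap.linearMap_vsub, AffineMap.linearMap_vsub, hu, hv, hw]

lemma exists_linear_comp_eq {E₁ E₂ E₃ : Type*} [AddCommGroup E₁] [Module ℝ E₁]
    [AddCommGroup E₂] [Module ℝ E₂] [AddCommGroup E₃] [Module ℝ E₃]
    (S₁ : E₁ →ₗ[ℝ] E₂) (S₂ : E₁ →ₗ[ℝ] E₃) (h : LinearMap.ker S₁ ≤ LinearMap.ker S₂) :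
    ∃ L : E₂ →ₗ[ℝ] E₃, ∀ x, L (S₁ x) = S₂ x := by
  obtain ⟨q, hq⟩ := (LinearMap.range S₁).exists_isCompl
  refine ⟨(Submodule.liftQ (LinearMap.ker S₁) S₂ h).comp
    ((S₁.quotKerEquivRange.symm : LinearMap.range S₁ →ₗ[ℝ] _).comp
      (Submodule.linearProjOfIsCompl _ q hq)), fun x => ?_⟩
  have h1 : (Submodule.linearProjOfIsCompl _ q hq) (S₁ x)
      = ⟨S₁ x, LinearMap.mem_range_self S₁ x⟩ :=
    Submodule.linearProjOfIsCompl_apply_left hq ⟨S₁ x, LinearMap.mem_range_self S₁ x⟩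
  rw [LinearMap.comp_apply, LinearMap.comp_apply, h1, LinearEquiv.coe_coe,
    LinearMap.quotKerEquivRange_symm_apply_image, Submodule.mkQ_apply, Submodule.liftQ_apply]

/-- The linear map `l ↦ ∑ g, l g • (M g - 1)`. -/
def combMap [DecidableEq G] {n : ℕ} (M : G → Matrix (Fin n) (Fin n) ℝ) :
    (G → ℝ) →ₗ[ℝ] Matrix (Fin n) (Fin n) ℝ where
  toFun l := ∑ g : G, l g • (M g - 1)
  map_add' l₁ l₂ := by simp [add_smul, Finset.sum_add_distrib]
  map_smul' c l := by simp [smul_smul, Finset.smul_sum]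

lemma combMap_single [DecidableEq G] {n : ℕ} (M : G → Matrix (Fin n) (Fin n) ℝ) (g : G) :
    combMap M (Pi.single g 1) = M g - 1 := by
  simp only [combMap, LinearMap.coe_mk, AddHom.coe_mk]
  rw [Finset.sum_eq_single g]
  · simp
  · intro h _ hh; simp [Pi.single_eq_of_ne hh]
  · simp

lemma combMap_eq_zero_iff [DecidableEq G] {n : ℕ} (π : G →* Equiv.Perm (Fin n)) (l : G → ℝ) :
    combMap (fun g => permMat n (π g)) l = 0 ↔
      (fun g => l g - (if g = 1 then ∑ h : G, l h else 0)) ∈ affKer (permRep n π) := by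
  rw [mem_affKer_permRep]
  have hsum0 : ∑ g : G, (l g - if g = 1 then ∑ h : G, l h else 0) = 0 := by
    simp [Finset.sum_sub_distrib]
  have hmat : ∑ g : G, (l g - if g = 1 then ∑ h : G, l h else 0) • permMat n (π g)
      = combMap (fun g => permMat n (π g)) l := by
    simp only [combMap, LinearMap.coe_mk, AddHom.coe_mk, sub_smul, smul_sub,
      Finset.sum_sub_distrib, ite_smul, zero_smul]
    rw [Finset.sum_ite_eq' Finset.univ (1 : G) (fun g => (∑ h : G, l h) • permMat n (π g))]
    simp [map_one π, permMat_one, ← Finset.sum_smul]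
  constructor
  · intro h; exact ⟨by rw [hmat]; exact h, hsum0⟩
  · rintro ⟨h1, _⟩; rw [← hmat]; exact h1

lemma zeroOne_mem_extremePoints {n : ℕ} {S : Set (Matrix (Fin n) (Fin n) ℝ)}
    (hS : ∀ A ∈ S, ∀ i j, A i j = 0 ∨ A i j = 1)
    {M : Matrix (Fin n) (Fin n) ℝ} (hM : M ∈ S) :
    M ∈ Set.extremePoints ℝ (convexHull ℝ S) := by
  have hbound : ∀ A ∈ convexHull ℝ S, ∀ i j, 0 ≤ A i j ∧ A i j ≤ 1 := by
    intro A hA i j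
    have hconv : Convex ℝ {B : Matrix (Fin n) (Fin n) ℝ | 0 ≤ B i j ∧ B i j ≤ 1} := by
      rintro x ⟨hx0, hx1⟩ y ⟨hy0, hy1⟩ a b ha hb hab
      constructor
      · have : (a • x + b • y) i j = a * x i j + b * y i j := by simp [Matrix.add_apply]
        rw [this]; nlinarith
      · have : (a • x + b • y) i j = a * x i j + b * y i j := by simp [Matrix.add_apply]
        rw [this]; nlinarith
    have := convexHull_min (fun B hB => ?_) hconv hA
    · exact this
    · rcases hS B hB i j with h | h <;> simp [h]
  refine ⟨subset_convexHull ℝ S hM, ?_⟩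
  rintro x₁ hx₁ x₂ hx₂ ⟨a, b, ha, hb, hab, hseg⟩
  have hentry : ∀ i j, x₁ i j = M i j ∧ x₂ i j = M i j := by
    intro i j
    have h1 := hbound x₁ hx₁ i j
    have h2 := hbound x₂ hx₂ i j
    have heq : a * x₁ i j + b * x₂ i j = M i j := by
      have := congrFun (congrFun hseg i) j
      simpa [Matrix.add_apply] using this
    rcases hS M hM i j with h | h <;> rw [h] at heq ⊢ <;>
      constructor <;> nlinarith [h1.1, h1.2, h2.1, h2.2]
  ext i j; exact (hentry i j).1

lemma affKer_prodRep {V W : Type} [AddCommGroup V] [Module ℝ V]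
    [AddCommGroup W] [Module ℝ W]
    (ρ : Representation ℝ G V) (σ : Representation ℝ G W) :
    affKer (prodRep ρ σ) = affKer ρ ∩ affKer σ := by
  ext l
  have happ : ∀ (l : G → ℝ) (v : V) (w : W),
      (∑ g : G, l g • ((prodRep ρ σ) g : (V × W) →ₗ[ℝ] (V × W))) (v, w)
      = (∑ g : G, l g • (ρ g) v, ∑ g : G, l g • (σ g) w) := by
    intro l v w
    rw [LinearMap.sum_apply]
    refine Prod.ext ?_ ?_
    · rw [Prod.fst_sum]; exact Finset.sum_congr rfl fun g _ => rfl
    · rw [Prod.snd_sum]; exact Finset.sum_congr rfl fun g _ => rfl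
  have key : ∀ {l : G → ℝ}, (∑ g : G, l g • ((prodRep ρ σ) g : (V × W) →ₗ[ℝ] (V × W))) = 0 →
      ∀ v w, (∑ g : G, l g • (ρ g) v) = 0 ∧ (∑ g : G, l g • (σ g) w) = 0 := by
    intro l h1 v w
    have h := happ l v w
    rw [h1, LinearMap.zero_apply] at h
    exact Prod.mk_eq_zero.mp h.symm
  constructor
  · rintro ⟨h1, h2⟩
    refine ⟨⟨?_, h2⟩, ⟨?_, h2⟩⟩
    · ext v
      have := (key h1 v 0).1
      simpa using this
    · ext w
      have := (key h1 0 w).2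
      simpa using this
  · rintro ⟨⟨ha, h2⟩, ⟨hb, _⟩⟩
    refine ⟨?_, h2⟩
    refine LinearMap.ext fun vw => ?_
    obtain ⟨v, w⟩ := vw
    rw [LinearMap.zero_apply, happ l v w]
    have hav : (∑ g : G, l g • (ρ g) v) = 0 := by
      have := congrFun (congrArg (DFunLike.coe) ha) v
      simpa using this
    have hbw : (∑ g : G, l g • (σ g) w) = 0 := by
      have := congrFun (congrArg (DFunLike.coe) hb) w
      simpa using this
    exact Prod.mk_eq_zero.mpr ⟨hav, hbw⟩

lemma affKer_eq_of_repIso {V W : Type} [AddCommGroup V] [Module ℝ V]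
    [AddCommGroup W] [Module ℝ W]
    {ρ : Representation ℝ G V} {σ : Representation ℝ G W}
    (h : RepIso ρ σ) : affKer ρ = affKer σ := by
  obtain ⟨e, he⟩ := h
  ext l
  have main : ∀ (h1 : (∑ g : G, l g • (ρ g : V →ₗ[ℝ] V)) = 0),
      (∑ g : G, l g • (σ g : W →ₗ[ℝ] W)) = 0 := by
    intro h1
    refine LinearMap.ext fun w => ?_
    have h2 : (∑ g : G, l g • (ρ g : V →ₗ[ℝ] V)) (e.symm w) = 0 := by rw [h1]; rfl
    have h3 : e ((∑ g : G, l g • (ρ g : V →ₗ[ℝ] V)) (e.symm w)) = 0 := by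
      rw [h2, map_zero]
    rw [LinearMap.sum_apply, map_sum] at h3
    simp only [LinearMap.smul_apply, map_smul, he, e.apply_symm_apply] at h3
    simpa using h3
  have main' : ∀ (h1 : (∑ g : G, l g • (σ g : W →ₗ[ℝ] W)) = 0),
      (∑ g : G, l g • (ρ g : V →ₗ[ℝ] V)) = 0 := by
    intro h1
    refine LinearMap.ext fun v => ?_
    have h2 : (∑ g : G, l g • (σ g : W →ₗ[ℝ] W)) (e v) = 0 := by rw [h1]; rfl
    have h3 : e.symm ((∑ g : G, l g • (σ g : W →ₗ[ℝ] W)) (e v)) = 0 := by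
      rw [h2, map_zero]
    rw [LinearMap.sum_apply, map_sum] at h3
    have he' : ∀ (g : G) (v : V), e.symm (σ g (e v)) = ρ g v := by
      intro g v; rw [← he, e.symm_apply_apply]
    simp only [LinearMap.smul_apply, map_smul, he'] at h3
    simpa using h3
  constructor
  · rintro ⟨h1, h2⟩; exact ⟨main h1, h2⟩
  · rintro ⟨h1, h2⟩; exact ⟨main' h1, h2⟩

lemma stablyEquivalent_iff_affKer_eq {V W : Type} [AddCommGroup V] [Module ℝ V]
    [AddCommGroup W] [Module ℝ W]
    (ρ₁ : Representation ℝ G V) (ρ₂ : Representation ℝ G W) :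
    StablyEquivalent ρ₁ ρ₂ ↔ affKer ρ₁ = affKer ρ₂ := by
  constructor
  · rintro ⟨V', _, _, ρ₁', W', _, _, ρ₂', h1, h2, hiso⟩
    have := affKer_eq_of_repIso hiso
    rw [affKer_prodRep, affKer_prodRep] at this
    rw [show affKer ρ₁ = affKer ρ₁ ∩ affKer ρ₁' from (Set.inter_eq_self_of_subset_left h1).symm,
      show affKer ρ₂ = affKer ρ₂ ∩ affKer ρ₂' from (Set.inter_eq_self_of_subset_left h2).symm,
      this]
  · intro h
    refine ⟨W, inferInstance, inferInstance, ρ₂, V, inferInstance, inferInstance, ρ₁,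
      le_of_eq h, le_of_eq h.symm, ⟨LinearEquiv.prodComm ℝ V W, fun g v => rfl⟩⟩

/-- The affine map `x ↦ L (x - e₀) + f₀`. -/
def affOf {E F : Type*} [AddCommGroup E] [Module ℝ E] [AddCommGroup F] [Module ℝ F]
    (L : E →ₗ[ℝ] F) (e₀ : E) (f₀ : F) : E →ᵃ[ℝ] F where
  toFun x := L (x - e₀) + f₀
  linear := L
  map_vadd' p v := by
    show L (v + p - e₀) + f₀ = L v + (L (p - e₀) + f₀)
    rw [add_sub_assoc, map_add, add_assoc]

lemma affOf_apply {E F : Type*} [AddCommGroup E] [Module ℝ E] [AddCommGroup F] [Module ℝ F]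
    (L : E →ₗ[ℝ] F) (e₀ : E) (f₀ : F) (x : E) : affOf L e₀ f₀ x = L (x - e₀) + f₀ := rfl

lemma permMat_zeroOne {n : ℕ} (σ : Equiv.Perm (Fin n)) (i j : Fin n) :
    permMat n σ i j = 0 ∨ permMat n σ i j = 1 := by
  by_cases h : i = σ j <;> simp [permMat, h]
/-- Corollary. `(G, π₁)` and `(G, π₂)` are effectively equivalent
if and only if there exist a group automorphism `φ` of `G` and an affine
`(G, φ)`-isomorphism between `P(Π₁)` and `P(Π₂)`, i.e. an affine isomorphism
`Φ : aff(P(Π₁)) → aff(P(Π₂))` with `Φ(P(Π₁)) = P(Π₂)` and `Φ(g·x) = φ(g)·Φ(x)`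
for all `g ∈ G` and all vertices `x` of `P(Π₁)` (action `g · M := M_{πᵢ(g)} M`). -/
theorem effectivelyEquivalent_iff_affine_G_phi_isomorphism
    {n₁ n₂ : ℕ} (π₁ : G →* Equiv.Perm (Fin n₁)) (π₂ : G →* Equiv.Perm (Fin n₂))
    (hπ₁ : Function.Injective π₁) (hπ₂ : Function.Injective π₂) :
    (∃ φ : G ≃* G,
      StablyEquivalent (permRep n₁ π₁) ((permRep n₂ π₂).comp φ.toMonoidHom)) ↔
    (∃ (φ : G ≃* G)
      (f : Matrix (Fin n₁) (Fin n₁) ℝ →ᵃ[ℝ] Matrix (Fin n₂) (Fin n₂) ℝ)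
      (f' : Matrix (Fin n₂) (Fin n₂) ℝ →ᵃ[ℝ] Matrix (Fin n₁) (Fin n₁) ℝ),
      f '' (convexHull ℝ (Set.range fun g : G => permMat n₁ (π₁ g)))
        = convexHull ℝ (Set.range fun g : G => permMat n₂ (π₂ g)) ∧
      (∀ x ∈ affineSpan ℝ (convexHull ℝ (Set.range fun g : G => permMat n₁ (π₁ g))),
        f' (f x) = x) ∧
      (∀ y ∈ affineSpan ℝ (convexHull ℝ (Set.range fun g : G => permMat n₂ (π₂ g))),
        f (f' y) = y) ∧
      (∀ g : G,
        ∀ x ∈ Set.extremePoints ℝ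
          (convexHull ℝ (Set.range fun g : G => permMat n₁ (π₁ g))),
        f (permMat n₁ (π₁ g) * x) = permMat n₂ (π₂ (φ g)) * f x)) := by
  classical
  have hrep : ∀ (φ : G ≃* G),
      (permRep n₂ π₂).comp φ.toMonoidHom = permRep n₂ (π₂.comp φ.toMonoidHom) := fun φ => rfl
  constructor
  · rintro ⟨φ, hst⟩
    have hker : affKer (permRep n₁ π₁) = affKer (permRep n₂ (π₂.comp φ.toMonoidHom)) := by
      rw [← hrep φ]; exact (stablyEquivalent_iff_affKer_eq _ _).mp hst
    set M₁ : G → Matrix (Fin n₁) (Fin n₁) ℝ := fun g => permMat n₁ (π₁ g) with hM₁def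
    set Mψ : G → Matrix (Fin n₂) (Fin n₂) ℝ := fun g => permMat n₂ (π₂ (φ g)) with hMψdef
    have hkerS : LinearMap.ker (combMap M₁) = LinearMap.ker (combMap Mψ) := by
      ext l
      rw [LinearMap.mem_ker, LinearMap.mem_ker]
      rw [show combMap M₁ l = combMap (fun g => permMat n₁ (π₁ g)) l from rfl,
        show combMap Mψ l = combMap (fun g => permMat n₂ ((π₂.comp φ.toMonoidHom) g)) l from rfl,
        combMap_eq_zero_iff π₁, combMap_eq_zero_iff (π₂.comp φ.toMonoidHom), hker]
    obtain ⟨L, hL⟩ := exists_linear_comp_eq (combMap M₁) (combMap Mψ) (le_of_eq hkerS)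
    obtain ⟨L', hL'⟩ := exists_linear_comp_eq (combMap Mψ) (combMap M₁) (le_of_eq hkerS.symm)
    set f := affOf L 1 1 with hfdef
    set f' := affOf L' 1 1 with hf'def
    have hf : ∀ g, f (M₁ g) = Mψ g := by
      intro g
      rw [hfdef, affOf_apply, show M₁ g - 1 = combMap M₁ (Pi.single g 1) from
        (combMap_single M₁ g).symm, hL, combMap_single, sub_add_cancel]
    have hf' : ∀ g, f' (Mψ g) = M₁ g := by
      intro g
      rw [hf'def, affOf_apply, show Mψ g - 1 = combMap Mψ (Pi.single g 1) from
        (combMap_single Mψ g).symm, hL', combMap_single, sub_add_cancel]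
    refine ⟨φ, f, f', ?_, ?_, ?_, ?_⟩
    · rw [AffineMap.image_convexHull]
      congr 1
      ext x
      constructor
      · rintro ⟨y, ⟨g, rfl⟩, rfl⟩
        exact ⟨φ g, (hf g).symm⟩
      · rintro ⟨g, rfl⟩
        refine ⟨M₁ (φ.symm g), ⟨φ.symm g, rfl⟩, ?_⟩
        rw [hf]
        simp [hMψdef]
    · intro x hx
      rw [affineSpan_convexHull] at hx
      exact affineMap_eqOn_affineSpan (f := f'.comp f) (g := AffineMap.id ℝ _)
        (fun y hy => by obtain ⟨g, rfl⟩ := hy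
                        show f' (f (M₁ g)) = M₁ g
                        rw [hf, hf']) hx
    · intro y hy
      rw [affineSpan_convexHull] at hy
      refine affineMap_eqOn_affineSpan (f := f.comp f') (g := AffineMap.id ℝ _)
        (fun z hz => ?_) hy
      obtain ⟨g, rfl⟩ := hz
      show f (f' (permMat n₂ (π₂ g))) = permMat n₂ (π₂ g)
      have : permMat n₂ (π₂ g) = Mψ (φ.symm g) := by simp [hMψdef]
      rw [this, hf', hf]
    · intro g x hx
      obtain ⟨h, rfl⟩ := extremePoints_convexHull_subset hx
      have hmul : permMat n₁ (π₁ g) * M₁ h = M₁ (g * h) := by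
        show permMat n₁ (π₁ g) * permMat n₁ (π₁ h) = permMat n₁ (π₁ (g * h))
        rw [map_mul, permMat_mul]
      rw [hmul, hf, hf]
      rw [hMψdef]
      simp only [map_mul, permMat_mul]
  · rintro ⟨φ, f, f', h1, h2, h3, h4⟩
    refine ⟨φ, (stablyEquivalent_iff_affKer_eq _ _).mpr ?_⟩
    rw [hrep φ]
    set M₁ : G → Matrix (Fin n₁) (Fin n₁) ℝ := fun g => permMat n₁ (π₁ g) with hM₁def
    set M₂ : G → Matrix (Fin n₂) (Fin n₂) ℝ := fun g => permMat n₂ (π₂ g) with hM₂def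
    have hext₁ : ∀ g, M₁ g ∈ Set.extremePoints ℝ (convexHull ℝ (Set.range M₁)) := by
      intro g
      refine zeroOne_mem_extremePoints ?_ ⟨g, rfl⟩
      rintro A ⟨h, rfl⟩ i j
      exact permMat_zeroOne _ i j
    have hone : M₁ 1 = 1 := by
      show permMat n₁ (π₁ 1) = 1
      rw [map_one, permMat_one]
    have hmemP₁ : ∀ g, M₁ g ∈ convexHull ℝ (Set.range M₁) :=
      fun g => subset_convexHull _ _ ⟨g, rfl⟩
    have hspan₁ : ∀ g, M₁ g ∈ affineSpan ℝ (convexHull ℝ (Set.range M₁)) :=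
      fun g => subset_affineSpan _ _ (hmemP₁ g)
    have hfg : ∀ g, f (M₁ g) = permMat n₂ (π₂ (φ g)) * f (M₁ 1) := by
      intro g
      have := h4 g (M₁ 1) (hext₁ 1)
      rw [hone, mul_one] at this
      rw [hone]
      exact this
    -- `f (M₁ 1)` is an extreme point of the second polytope
    have hcext : f (M₁ 1) ∈ Set.extremePoints ℝ (convexHull ℝ (Set.range M₂)) := by
      obtain ⟨hmem, hext⟩ := hext₁ 1
      refine ⟨h1 ▸ Set.mem_image_of_mem f hmem, ?_⟩
      rintro y₁ hy₁ y₂ hy₂ ⟨a, b, ha, hb, hab, hseg⟩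
      have hy₁' : f' y₁ ∈ convexHull ℝ (Set.range M₁) ∧ f (f' y₁) = y₁ := by
        rw [← h1] at hy₁
        obtain ⟨x, hx, rfl⟩ := hy₁
        rw [h2 x (subset_affineSpan _ _ hx)]
        exact ⟨hx, rfl⟩
      have hy₂' : f' y₂ ∈ convexHull ℝ (Set.range M₁) ∧ f (f' y₂) = y₂ := by
        rw [← h1] at hy₂
        obtain ⟨x, hx, rfl⟩ := hy₂
        rw [h2 x (subset_affineSpan _ _ hx)]
        exact ⟨hx, rfl⟩
      have hx0 : a • f' y₁ + b • f' y₂ = M₁ 1 := by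
        have hc : f' (a • y₁ + b • y₂) = a • f' y₁ + b • f' y₂ :=
          Convex.combo_affine_apply hab
        rw [← hc, hseg, h2 (M₁ 1) (hspan₁ 1)]
      have e1 := hext hy₁'.1 hy₂'.1 ⟨a, b, ha, hb, hab, hx0⟩
      rw [← hy₁'.2, e1]
    obtain ⟨d, hd⟩ := extremePoints_convexHull_subset hcext
    -- hd : M₂ d = f (M₁ 1)
    have hinv : permMat n₂ (π₂ d) * permMat n₂ (π₂ d⁻¹) = 1 := by
      rw [← permMat_mul, ← map_mul, mul_inv_cancel, map_one, permMat_one]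
    have hdec : ∀ x : Matrix (Fin n₁) (Fin n₁) ℝ, f x = f.linear x + f 0 := by
      intro x
      have := f.map_vadd 0 x
      simpa using this
    have hlin : ∀ g, f.linear (M₁ g - 1) = f (M₁ g) - f (M₁ 1) := by
      intro g
      have := f.linearMap_vsub (M₁ g) (M₁ 1)
      simp only [vsub_eq_sub, map_sub] at this ⊢
      rw [← hone]
      exact this
    ext l
    rw [mem_affKer_permRep, mem_affKer_permRep]
    simp only [MonoidHom.comp_apply, MulEquiv.coe_toMonoidHom]
    constructor
    · rintro ⟨hmat, hsum⟩
      refine ⟨?_, hsum⟩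
      have hstep : ∑ g : G, l g • f (M₁ g) = 0 := by
        have e1 : ∑ g : G, l g • f (M₁ g)
            = f.linear (∑ g : G, l g • M₁ g) + (∑ g : G, l g) • f 0 := by
          rw [map_sum, Finset.sum_smul, ← Finset.sum_add_distrib]
          refine Finset.sum_congr rfl fun g _ => ?_
          rw [hdec (M₁ g), smul_add, map_smul]
        rw [e1, hmat, hsum, map_zero, zero_smul, add_zero]
      have hstep2 : ∑ g : G, l g • f (M₁ g)
          = (∑ g : G, l g • permMat n₂ (π₂ (φ g))) * permMat n₂ (π₂ d) := by
        rw [Finset.sum_mul]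
        refine Finset.sum_congr rfl fun g _ => ?_
        rw [hfg g, ← hd, smul_mul_assoc]
      have hz : (∑ g : G, l g • permMat n₂ (π₂ (φ g))) * permMat n₂ (π₂ d) = 0 := by
        rw [← hstep2, hstep]
      calc (∑ g : G, l g • permMat n₂ (π₂ (φ g)))
          = (∑ g : G, l g • permMat n₂ (π₂ (φ g)))
            * (permMat n₂ (π₂ d) * permMat n₂ (π₂ d⁻¹)) := by rw [hinv, mul_one]
        _ = ((∑ g : G, l g • permMat n₂ (π₂ (φ g))) * permMat n₂ (π₂ d))
            * permMat n₂ (π₂ d⁻¹) := by rw [mul_assoc]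
        _ = 0 := by rw [hz, zero_mul]
    · rintro ⟨hmat, hsum⟩
      refine ⟨?_, hsum⟩
      have hv : ∑ g : G, l g • (M₁ g - 1) = ∑ g : G, l g • M₁ g := by
        rw [show (∑ g : G, l g • (M₁ g - 1))
            = ∑ g : G, (l g • M₁ g - l g • (1 : Matrix (Fin n₁) (Fin n₁) ℝ)) from
          Finset.sum_congr rfl fun g _ => smul_sub _ _ _, Finset.sum_sub_distrib,
          ← Finset.sum_smul, hsum, zero_smul, sub_zero]
      have hFv : f.linear (∑ g : G, l g • M₁ g) = 0 := by
        have e1 : f.linear (∑ g : G, l g • M₁ g)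
            = ∑ g : G, l g • (f (M₁ g) - f (M₁ 1)) := by
          rw [← hv, map_sum]
          refine Finset.sum_congr rfl fun g _ => ?_
          rw [map_smul, hlin]
        have e2 : ∑ g : G, l g • (f (M₁ g) - f (M₁ 1))
            = (∑ g : G, l g • permMat n₂ (π₂ (φ g))) * permMat n₂ (π₂ d)
              - (∑ g : G, l g) • f (M₁ 1) := by
          rw [show (∑ g : G, l g • (f (M₁ g) - f (M₁ 1)))
              = ∑ g : G, (l g • f (M₁ g) - l g • f (M₁ 1)) from
            Finset.sum_congr rfl fun g _ => smul_sub _ _ _, Finset.sum_sub_distrib,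
            ← Finset.sum_smul, Finset.sum_mul]
          congr 1
          refine Finset.sum_congr rfl fun g _ => ?_
          rw [hfg g, ← hd, smul_mul_assoc]
        rw [e1, e2, hmat, hsum, zero_mul, zero_smul, sub_zero]
      have hfix : f'.linear (f.linear (∑ g : G, l g • M₁ g)) = ∑ g : G, l g • M₁ g := by
        conv_lhs => rw [← hv]
        conv_rhs => rw [← hv]
        rw [map_sum, map_sum]
        refine Finset.sum_congr rfl fun g _ => ?_
        rw [map_smul, map_smul, hlin]
        have e3 : f'.linear (f (M₁ g) - f (M₁ 1)) = f' (f (M₁ g)) - f' (f (M₁ 1)) := by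
          simpa using f'.linearMap_vsub (f (M₁ g)) (f (M₁ 1))
        rw [e3, h2 _ (hspan₁ g), h2 _ (hspan₁ 1), hone]
      rw [hFv, map_zero] at hfix
      exact hfix.symm
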